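/- The number of partitions of n with exactly one missing integer equals the number of partitions of n in which exactly one part appears exactly twice and all other parts appear exactly once. -/
import Mathlib

open Multiset Finset


/-- number of parts of `s` greater than `j` (the `j`-th column length). -/
def cfun (s : Multiset ℕ) (j : ℕ) : ℕ := s.countP (fun p => j < p)

lemma cfun_anti (s : Multiset ℕ) : Antitone (cfun s) := by
  intro j k h
  unfold cfun
  rw [Multiset.countP_eq_card_filter, Multiset.countP_eq_card_filter]
  exact Multiset.card_le_card (Multiset.monotone_filter_right s (fun x hx => lt_of_le_of_lt h hx))

lemma cfun_zero (s : Multiset ℕ) {j : ℕ} (h : ∀ p ∈ s, p ≤ j) : cfun s j = 0 := by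
  unfold cfun
  rw [Multiset.countP_eq_zero]
  intro a ha
  simpa using h a ha

lemma cfun_split (s : Multiset ℕ) {v : ℕ} (hv : 1 ≤ v) :
    cfun s (v - 1) = cfun s v + s.count v := by
  unfold cfun
  induction s using Multiset.induction_on with
  | empty => simp
  | cons a t ih =>
    rw [Multiset.countP_cons, Multiset.countP_cons, Multiset.count_cons]
    split_ifs <;> omega

/-- the conjugate partition's parts multiset. -/
def conjParts (s : Multiset ℕ) : Multiset ℕ := (Finset.range s.sup).val.map (cfun s)

lemma sup_mem (s : Multiset ℕ) (h : s ≠ 0) : s.sup ∈ s := by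
  have hne : s.toFinset.Nonempty := by
    rw [Multiset.toFinset_nonempty]; exact h
  have hm := s.toFinset.max'_mem hne
  have h1 : s.toFinset.max' hne ≤ s.sup := Multiset.le_sup (Multiset.mem_toFinset.1 hm)
  have h2 : s.sup ≤ s.toFinset.max' hne := by
    rw [Multiset.sup_le]
    intro b hb
    exact Finset.le_max' _ b (Multiset.mem_toFinset.2 hb)
  rw [le_antisymm h2 h1]
  exact Multiset.mem_toFinset.1 hm

lemma conjParts_card (s : Multiset ℕ) : Multiset.card (conjParts s) = s.sup := by
  simp [conjParts]

lemma conjParts_sum (s : Multiset ℕ) : (conjParts s).sum = s.sum := by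
  have key : ∀ (t : Multiset ℕ) (L : ℕ), (∀ p ∈ t, p ≤ L) →
      ∑ j ∈ Finset.range L, cfun t j = t.sum := by
    intro t L
    induction t using Multiset.induction_on with
    | empty => intro _; simp [cfun]
    | cons a t ih =>
      intro h
      have ha : a ≤ L := h a (Multiset.mem_cons_self a t)
      have hcons : ∀ j, cfun (a ::ₘ t) j = cfun t j + if j < a then 1 else 0 := by
        intro j; unfold cfun; rw [Multiset.countP_cons]
      simp only [hcons]
      rw [Finset.sum_add_distrib, ih (fun p hp => h p (Multiset.mem_cons_of_mem hp))]
      have hf : ∑ x ∈ Finset.range L, (if x < a then 1 else 0) = a := by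
        rw [← Finset.sum_filter]
        have : (Finset.range L).filter (fun j => j < a) = Finset.range a := by
          ext x; simp; omega
        rw [this]
        simp
      rw [hf, Multiset.sum_cons]
      omega
  have : (conjParts s).sum = ∑ j ∈ Finset.range s.sup, cfun s j := rfl
  rw [this, key s s.sup (fun p hp => Multiset.le_sup hp)]

lemma conjParts_pos (s : Multiset ℕ) (hs : s ≠ 0) {x : ℕ} (hx : x ∈ conjParts s) : 0 < x := by
  obtain ⟨j, hj, rfl⟩ := Multiset.mem_map.1 hx
  rw [Finset.mem_val, Finset.mem_range] at hj
  unfold cfun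
  rw [Multiset.countP_pos]
  exact ⟨s.sup, sup_mem s hs, hj⟩

lemma conjParts_toFinset_card (s : Multiset ℕ) (hpos : ∀ p ∈ s, 0 < p) :
    (conjParts s).toFinset.card = s.toFinset.card := by
  rcases eq_or_ne s 0 with rfl | hs
  · simp [conjParts]
  have hsupmem := sup_mem s hs
  have hsup1 : 1 ≤ s.sup := hpos _ hsupmem
  have htf : (conjParts s).toFinset = (Finset.range s.sup).image (cfun s) := by
    unfold conjParts
    rw [Multiset.toFinset_map, Finset.val_toFinset]
  rw [htf]
  have himg : (Finset.range s.sup).image (cfun s) = s.toFinset.image (fun p => cfun s (p - 1)) := by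
    apply Finset.ext
    intro v
    simp only [Finset.mem_image, Finset.mem_range, Multiset.mem_toFinset]
    constructor
    · rintro ⟨j, hj, rfl⟩
      -- take the smallest part greater than j
      have hTne : (s.toFinset.filter (fun p => j < p)).Nonempty :=
        ⟨s.sup, Finset.mem_filter.2 ⟨Multiset.mem_toFinset.2 hsupmem, hj⟩⟩
      set p := (s.toFinset.filter (fun p => j < p)).min' hTne with hp
      have hpmem := (s.toFinset.filter (fun p => j < p)).min'_mem hTne
      rw [Finset.mem_filter, Multiset.mem_toFinset] at hpmem
      refine ⟨p, hpmem.1, ?_⟩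
      have hmin : ∀ q ∈ s, j < q → p ≤ q := by
        intro q hq hjq
        exact Finset.min'_le _ q (Finset.mem_filter.2 ⟨Multiset.mem_toFinset.2 hq, hjq⟩)
      unfold cfun
      apply Multiset.countP_congr rfl
      intro x hx
      simp only [eq_iff_iff]
      have hjp := hpmem.2
      constructor
      · intro h1
        have hpx : p ≤ x := by omega
        omega
      · intro h1; have := hmin x hx h1; omega
    · rintro ⟨p, hp, rfl⟩
      have h1 := hpos p hp
      have h2 := Multiset.le_sup hp
      exact ⟨p - 1, by omega, rfl⟩
  rw [himg]
  apply Finset.card_image_of_injOn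
  intro p hp q hq hne
  simp only [Finset.mem_coe, Multiset.mem_toFinset] at hp hq
  by_contra hpq
  -- wlog p < q leads to strict inequality of cfun values
  have key : ∀ a b : ℕ, a ∈ s → b ∈ s → a < b → cfun s (b - 1) < cfun s (a - 1) := by
    intro a b ha hb hab
    have hle : s.filter (fun x => b - 1 < x) ≤ s.filter (fun x => a - 1 < x) :=
      Multiset.monotone_filter_right s (fun x hx => by omega)
    have hmema : a ∈ s.filter (fun x => a - 1 < x) :=
      Multiset.mem_filter.2 ⟨ha, by have := hpos a ha; omega⟩
    have hnmema : a ∉ s.filter (fun x => b - 1 < x) := by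
      rw [Multiset.mem_filter]
      rintro ⟨-, h⟩; omega
    have hlt : s.filter (fun x => b - 1 < x) < s.filter (fun x => a - 1 < x) :=
      lt_of_le_of_ne hle (fun h => hnmema (h ▸ hmema))
    unfold cfun
    rw [Multiset.countP_eq_card_filter, Multiset.countP_eq_card_filter]
    exact Multiset.card_lt_card hlt
  rcases lt_or_gt_of_ne hpq with h | h
  · exact absurd hne (key p q hp hq h).ne'
  · exact absurd hne.symm (key q p hq hp h).ne'

/-- an antitone function on `range L` is determined by its multiset of values. -/
lemma antitone_map_range_inj {f g : ℕ → ℕ} (hf : Antitone f) (hg : Antitone g) {L : ℕ}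
    (h : (Finset.range L).val.map f = (Finset.range L).val.map g) :
    ∀ j < L, f j = g j := by
  have count_char : ∀ (f : ℕ → ℕ), Antitone f → ∀ v j, j < L →
      (v ≤ f j ↔ j < Multiset.countP (fun x => v ≤ x) ((Finset.range L).val.map f)) := by
    intro f hf v j hj
    rw [Multiset.countP_map]
    have : Multiset.card (Multiset.filter (fun a => v ≤ f a) (Finset.range L).val)
        = ((Finset.range L).filter (fun a => v ≤ f a)).card := rfl
    rw [this]
    constructor
    · intro hv
      have hsub : Finset.range (j + 1) ⊆ (Finset.range L).filter (fun a => v ≤ f a) := by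
        intro i hi
        rw [Finset.mem_range] at hi
        exact Finset.mem_filter.2 ⟨Finset.mem_range.2 (by omega), le_trans hv (hf (by omega))⟩
      calc j < j + 1 := by omega
      _ = (Finset.range (j+1)).card := by simp
      _ ≤ _ := Finset.card_le_card hsub
    · intro hcard
      by_contra hv
      push_neg at hv
      have hsub : (Finset.range L).filter (fun a => v ≤ f a) ⊆ Finset.range j := by
        intro i hi
        rw [Finset.mem_filter, Finset.mem_range] at hi
        rw [Finset.mem_range]
        by_contra hij
        push_neg at hij
        have := hf hij
        omega
      have := Finset.card_le_card hsub
      rw [Finset.card_range] at this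
      omega
  intro j hj
  have h1 : ∀ v, v ≤ f j ↔ v ≤ g j := by
    intro v
    rw [count_char f hf v j hj, count_char g hg v j hj, h]
  exact le_antisymm ((h1 (f j)).1 le_rfl) ((h1 (g j)).2 le_rfl)

lemma conjParts_inj {s s' : Multiset ℕ} (hpos : ∀ p ∈ s, 0 < p) (hpos' : ∀ p ∈ s', 0 < p)
    (h : conjParts s = conjParts s') : s = s' := by
  have hL : s.sup = s'.sup := by
    have := congrArg Multiset.card h
    rwa [conjParts_card, conjParts_card] at this
  have hcf : ∀ j, cfun s j = cfun s' j := by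
    rw [conjParts, conjParts, ← hL] at h
    have hj1 := antitone_map_range_inj (cfun_anti s) (cfun_anti s') (L := s.sup) h
    intro j
    by_cases hj : j < s.sup
    · exact hj1 j hj
    · push_neg at hj
      rw [cfun_zero s (fun p hp => le_trans (Multiset.le_sup hp) hj),
        cfun_zero s' (fun p hp => le_trans (Multiset.le_sup hp) (hL ▸ hj))]
  ext a
  rcases Nat.eq_zero_or_pos a with rfl | ha
  · rw [Multiset.count_eq_zero_of_notMem (fun hm => absurd (hpos 0 hm) (by omega)),
      Multiset.count_eq_zero_of_notMem (fun hm => absurd (hpos' 0 hm) (by omega))]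
  · have e1 := cfun_split s ha
    have e2 := cfun_split s' ha
    rw [hcf, hcf] at e1
    omega

-- characterization of "exactly one part twice, rest once"
lemma multiplicity_cond_iff (t : Multiset ℕ) :
    ((t.toFinset.filter (fun a => t.count a = 2)).card = 1 ∧
      ∀ a ∈ t.toFinset, t.count a = 1 ∨ t.count a = 2) ↔
    Multiset.card t = t.toFinset.card + 1 := by
  have hsum : ∑ a ∈ t.toFinset, t.count a = Multiset.card t := t.toFinset_sum_count_eq
  have hge1 : ∀ a ∈ t.toFinset, 1 ≤ t.count a := fun a ha =>
    Multiset.count_pos.2 (Multiset.mem_toFinset.1 ha)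
  constructor
  · rintro ⟨h1, h2⟩
    rw [← hsum, ← Finset.sum_filter_add_sum_filter_not t.toFinset (fun a => t.count a = 2)]
    have e1 : ∑ a ∈ t.toFinset.filter (fun a => t.count a = 2), t.count a
        = 2 * (t.toFinset.filter (fun a => t.count a = 2)).card := by
      rw [Finset.sum_congr rfl (fun a ha => (Finset.mem_filter.1 ha).2), Finset.sum_const]
      ring
    have e2 : ∑ a ∈ t.toFinset.filter (fun a => ¬ t.count a = 2), t.count a
        = (t.toFinset.filter (fun a => ¬ t.count a = 2)).card := by
      rw [Finset.sum_congr rfl (fun a ha => by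
        have hm := Finset.mem_filter.1 ha
        rcases h2 a hm.1 with h | h
        · exact h
        · exact absurd h hm.2), Finset.sum_const]
      simp
    rw [e1, e2, h1]
    have := Finset.card_filter_add_card_filter_not (s := t.toFinset)
      (p := fun a => t.count a = 2)
    rw [h1] at this
    omega
  · intro h
    have hD : ∑ a ∈ t.toFinset, t.count a = t.toFinset.card + 1 := by rw [hsum, h]
    -- there is a ∈ toFinset with count ≥ 2
    have hex : ∃ a ∈ t.toFinset, 2 ≤ t.count a := by
      by_contra hc
      push_neg at hc
      have h1 : ∑ a ∈ t.toFinset, t.count a = ∑ _a ∈ t.toFinset, 1 :=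
        Finset.sum_congr rfl (fun a ha => by have := hge1 a ha; have := hc a ha; omega)
      rw [h1, Finset.sum_const, smul_eq_mul, mul_one] at hD
      omega
    obtain ⟨a, ha, ha2⟩ := hex
    have hsplit : t.count a + ∑ b ∈ t.toFinset.erase a, t.count b = t.toFinset.card + 1 := by
      rw [← hD]
      exact Finset.add_sum_erase t.toFinset (fun b => t.count b) ha
    have herasecard : (t.toFinset.erase a).card = t.toFinset.card - 1 := Finset.card_erase_of_mem ha
    have herasege : (t.toFinset.erase a).card ≤ ∑ b ∈ t.toFinset.erase a, t.count b := by
      calc (t.toFinset.erase a).card = ∑ _b ∈ t.toFinset.erase a, 1 := by simp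
      _ ≤ _ := Finset.sum_le_sum (fun b hb => hge1 b (Finset.mem_of_mem_erase hb))
    have hDpos : 1 ≤ t.toFinset.card := Finset.card_pos.2 ⟨a, ha⟩
    have hca : t.count a = 2 := by omega
    have hrest : ∀ b ∈ t.toFinset.erase a, t.count b = 1 := by
      intro b hb
      by_contra hb1
      have hb2 : 2 ≤ t.count b := by
        have := hge1 b (Finset.mem_of_mem_erase hb); omega
      have : t.count b + ∑ c ∈ (t.toFinset.erase a).erase b, t.count c
          = ∑ b ∈ t.toFinset.erase a, t.count b :=
        Finset.add_sum_erase (t.toFinset.erase a) (fun c => t.count c) hb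
      have hcard2 : ((t.toFinset.erase a).erase b).card = (t.toFinset.erase a).card - 1 :=
        Finset.card_erase_of_mem hb
      have hge2 : ((t.toFinset.erase a).erase b).card ≤ ∑ c ∈ (t.toFinset.erase a).erase b, t.count c := by
        calc ((t.toFinset.erase a).erase b).card = ∑ _c ∈ (t.toFinset.erase a).erase b, 1 := by simp
        _ ≤ _ := Finset.sum_le_sum (fun c hc =>
            hge1 c (Finset.mem_of_mem_erase (Finset.mem_of_mem_erase hc)))
      have hbpos : 1 ≤ (t.toFinset.erase a).card := Finset.card_pos.2 ⟨b, hb⟩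
      omega
    constructor
    · have : t.toFinset.filter (fun x => t.count x = 2) = {a} := by
        ext b
        simp only [Finset.mem_filter, Finset.mem_singleton]
        constructor
        · rintro ⟨hbm, hbc⟩
          by_contra hba
          have := hrest b (Finset.mem_erase.2 ⟨hba, hbm⟩)
          omega
        · rintro rfl
          exact ⟨ha, hca⟩
      rw [this]
      simp
    · intro b hb
      by_cases hba : b = a
      · subst hba; right; exact hca
      · left; exact hrest b (Finset.mem_erase.2 ⟨hba, hb⟩)

-- characterization of missingCount = 1
lemma missing_card (s : Multiset ℕ) (hpos : ∀ p ∈ s, 0 < p) (hs : s ≠ 0)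
    (hsupmem : s.sup ∈ s) :
    ((Finset.Ico 1 s.sup).filter (fun j => j ∉ s)).card + s.toFinset.card = s.sup := by
  have hsub : Disjoint ((Finset.Ico 1 s.sup).filter (fun j => j ∉ s)) s.toFinset := by
    rw [Finset.disjoint_left]
    intro x hx hx2
    exact (Finset.mem_filter.1 hx).2 (Multiset.mem_toFinset.1 hx2)
  have hunion : ((Finset.Ico 1 s.sup).filter (fun j => j ∉ s)) ∪ s.toFinset
      = Finset.Icc 1 s.sup := by
    ext x
    simp only [Finset.mem_union, Finset.mem_filter, Finset.mem_Ico, Finset.mem_Icc,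
      Multiset.mem_toFinset]
    constructor
    · rintro (⟨⟨h1, h2⟩, -⟩ | h)
      · omega
      · exact ⟨hpos x h, Multiset.le_sup h⟩
    · rintro ⟨h1, h2⟩
      by_cases hx : x ∈ s
      · right; exact hx
      · left
        refine ⟨⟨h1, ?_⟩, hx⟩
        rcases eq_or_lt_of_le h2 with rfl | h
        · exact absurd hsupmem hx
        · exact h
  have := Finset.card_union_of_disjoint hsub
  rw [hunion, Nat.card_Icc] at this
  omega

/-- conjugation of a partition. -/
def pconj {n : ℕ} (π : n.Partition) : n.Partition where
  parts := conjParts π.parts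
  parts_pos := by
    intro x hx
    rcases eq_or_ne π.parts 0 with h0 | h0
    · rw [conjParts, h0] at hx
      simp at hx
    · exact conjParts_pos π.parts h0 hx
  parts_sum := by rw [conjParts_sum, π.parts_sum]

lemma pconj_injective {n : ℕ} : Function.Injective (pconj (n := n)) := by
  intro π π' h
  have := congrArg Nat.Partition.parts h
  exact Nat.Partition.ext (conjParts_inj (fun _ h => π.parts_pos h) (fun _ h => π'.parts_pos h) this)

/-- The number of missing integers of a partition: positive integers less than
the largest part which do not occur as a part. -/
def missingCount {n : ℕ} (π : n.Partition) : ℕ :=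
  ((Finset.Ico 1 π.parts.sup).filter (fun j => j ∉ π.parts)).card

/-- `Pcount n m` is the number of partitions of `n` with exactly `m` missing integers. -/
def Pcount (n m : ℕ) : ℕ := Fintype.card {π : n.Partition // missingCount π = m}

lemma missing_iff {n : ℕ} (π : n.Partition) :
    missingCount π = 1 ↔ π.parts.sup = π.parts.toFinset.card + 1 := by
  rcases eq_or_ne π.parts 0 with h0 | h0
  · unfold missingCount
    rw [h0]
    simp
  · have := missing_card π.parts (fun _ h => π.parts_pos h) h0 (sup_mem _ h0)
    unfold missingCount
    omega

theorem statement2 (n : ℕ) :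
    Pcount n 1 = Fintype.card {π : n.Partition //
      (π.parts.toFinset.filter (fun a => π.parts.count a = 2)).card = 1 ∧
      ∀ a ∈ π.parts.toFinset, π.parts.count a = 1 ∨ π.parts.count a = 2} := by
  have hbij : Function.Bijective (pconj (n := n)) :=
    Finite.injective_iff_bijective.mp pconj_injective
  apply Fintype.card_congr
  refine Equiv.subtypeEquiv (Equiv.ofBijective _ hbij) ?_
  intro π
  rw [Equiv.ofBijective_apply, missing_iff, multiplicity_cond_iff]
  show π.parts.sup = π.parts.toFinset.card + 1 ↔
    Multiset.card (conjParts π.parts) = (conjParts π.parts).toFinset.card + 1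
  rw [conjParts_card, conjParts_toFinset_card π.parts (fun _ h => π.parts_pos h)]
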